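/- Let D be a metric on ℂ that induces the Euclidean topology, such that (ℂ, D) is a proper length space, and suppose that for every point q ∈ ℚ² (complex numbers with rational real and imaginary parts) there is exactly one D-geodesic from 0 to q. Then for every s > 0 and every point y on the topological boundary ∂𝓑_s^•(0;D) of the filled metric ball, one has D(0,y) = s, and there exist a D-geodesic P : [0,s] → ℂ from 0 to y and a sequence of points q_1, q_2, … ∈ ℚ² with q_n ∉ 𝓑_s^•(0;D) for all n, such that the restrictions to [0,s] of the unique D-geodesics from 0 to q_n converge uniformly on [0,s] to P. -/

import Mathlib

open Set

/-- The filled metric ball `𝓑_s^•(z; D)`: the union of the closure of the open `D`-ball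
`{v | D z v < s}` with all points disconnected from `∞` by this closure, i.e. the set of points
whose connected component in the complement of the closed ball is bounded. -/
def filledBall (D : ℂ → ℂ → ℝ) (z : ℂ) (s : ℝ) : Set ℂ :=
  {w : ℂ | Bornology.IsBounded (connectedComponentIn (closure {v : ℂ | D z v < s})ᶜ w)}

/-- The `D`-length of `γ` on `[0,1]` (i.e. the supremum over partitions of the sums of
`D`-distances of consecutive points) is at most `c`. -/
def DLengthLE (D : ℂ → ℂ → ℝ) (γ : ℝ → ℂ) (c : ℝ) : Prop :=
  ∀ (n : ℕ) (t : Fin (n + 1) → ℝ), Monotone t → (∀ i, t i ∈ Icc (0 : ℝ) 1) →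
    t 0 = 0 → t (Fin.last n) = 1 →
    ∑ i : Fin n, D (γ (t i.castSucc)) (γ (t i.succ)) ≤ c

/-- `(ℂ, D)` is a length space: any two points are joined by continuous paths of `D`-length
arbitrarily close to their `D`-distance. -/
def IsLengthSpace (D : ℂ → ℂ → ℝ) : Prop :=
  ∀ x y : ℂ, ∀ ε : ℝ, 0 < ε → ∃ γ : ℝ → ℂ,
    ContinuousOn γ (Icc 0 1) ∧ γ 0 = x ∧ γ 1 = y ∧ DLengthLE D γ (D x y + ε)

/-- `P` is a `D`-geodesic from `x` to `y`: a unit speed path on `[0, D x y]` from `x` to `y`. -/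
def IsGeodesicFrom (D : ℂ → ℂ → ℝ) (x y : ℂ) (P : ℝ → ℂ) : Prop :=
  P 0 = x ∧ P (D x y) = y ∧
    ∀ a ∈ Icc (0 : ℝ) (D x y), ∀ b ∈ Icc (0 : ℝ) (D x y), D (P a) (P b) = |a - b|

/-- A point of `ℂ ≅ ℝ²` with rational coordinates. -/
def IsRationalPoint (q : ℂ) : Prop := ∃ a b : ℚ, q = (a : ℝ) + (b : ℝ) * Complex.I


private lemma dnn (D : ℂ → ℂ → ℝ) (hD0 : ∀ x y, D x y = 0 ↔ x = y)
    (hDsymm : ∀ x y, D x y = D y x) (hDtri : ∀ x y z, D x z ≤ D x y + D y z) (x y : ℂ) :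
    0 ≤ D x y := by
  have h := hDtri x y x
  rw [(hD0 x x).mpr rfl, hDsymm y x] at h
  linarith

private lemma openLT (D : ℂ → ℂ → ℝ)
    (htop : ∀ s : Set ℂ, IsOpen s ↔ ∀ x ∈ s, ∃ ε > 0, {y : ℂ | D x y < ε} ⊆ s)
    (hDtri : ∀ x y z, D x z ≤ D x y + D y z) (x : ℂ) (ε : ℝ) :
    IsOpen {w : ℂ | D x w < ε} := by
  rw [htop]
  intro z hz
  simp only [mem_setOf_eq] at hz
  refine ⟨ε - D x z, by linarith, fun w hw => ?_⟩
  simp only [mem_setOf_eq] at hw ⊢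
  have := hDtri x z w
  linarith

private lemma smallD (D : ℂ → ℂ → ℝ) (hD0 : ∀ x y, D x y = 0 ↔ x = y)
    (hDtri : ∀ x y z, D x z ≤ D x y + D y z)
    (htop : ∀ s : Set ℂ, IsOpen s ↔ ∀ x ∈ s, ∃ ε > 0, {y : ℂ | D x y < ε} ⊆ s)
    (x : ℂ) {ε : ℝ} (hε : 0 < ε) : ∃ δ > 0, ∀ w, dist x w < δ → D x w < ε := by
  have hop := openLT D htop hDtri x ε
  have hx : x ∈ {w : ℂ | D x w < ε} := by simp [mem_setOf_eq, (hD0 x x).mpr rfl, hε]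
  obtain ⟨δ, hδ, hball⟩ := Metric.isOpen_iff.mp hop x hx
  exact ⟨δ, hδ, fun w hw => hball (by rwa [Metric.mem_ball, dist_comm])⟩

private lemma smallE (D : ℂ → ℂ → ℝ)
    (htop : ∀ s : Set ℂ, IsOpen s ↔ ∀ x ∈ s, ∃ ε > 0, {y : ℂ | D x y < ε} ⊆ s)
    (x : ℂ) {ε : ℝ} (hε : 0 < ε) : ∃ δ > 0, ∀ w, D x w < δ → dist x w < ε := by
  obtain ⟨δ, hδ, hsub⟩ := (htop (Metric.ball x ε)).mp Metric.isOpen_ball x (Metric.mem_ball_self hε)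
  refine ⟨δ, hδ, fun w hw => ?_⟩
  have := hsub hw
  rwa [Metric.mem_ball, dist_comm] at this

private lemma tendstoD (D : ℂ → ℂ → ℝ) (hD0 : ∀ x y, D x y = 0 ↔ x = y)
    (hDsymm : ∀ x y, D x y = D y x) (hDtri : ∀ x y z, D x z ≤ D x y + D y z)
    (htop : ∀ s : Set ℂ, IsOpen s ↔ ∀ x ∈ s, ∃ ε > 0, {y : ℂ | D x y < ε} ⊆ s)
    {f : ℕ → ℂ} {x : ℂ} (h : Filter.Tendsto f Filter.atTop (nhds x)) :
    Filter.Tendsto (fun n => D x (f n)) Filter.atTop (nhds 0) := by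
  rw [Metric.tendsto_atTop] at h ⊢
  intro ε hε
  obtain ⟨δ, hδ, hd⟩ := smallD D hD0 hDtri htop x hε
  obtain ⟨N, hN⟩ := h δ hδ
  refine ⟨N, fun n hn => ?_⟩
  have h2 := hd (f n) (by rw [dist_comm]; exact hN n hn)
  rw [Real.dist_eq, sub_zero, abs_of_nonneg (dnn D hD0 hDsymm hDtri _ _)]
  exact h2

private lemma tendstoE (D : ℂ → ℂ → ℝ)
    (htop : ∀ s : Set ℂ, IsOpen s ↔ ∀ x ∈ s, ∃ ε > 0, {y : ℂ | D x y < ε} ⊆ s)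
    {f : ℕ → ℂ} {x : ℂ} (h : Filter.Tendsto (fun n => D x (f n)) Filter.atTop (nhds 0)) :
    Filter.Tendsto f Filter.atTop (nhds x) := by
  rw [Metric.tendsto_atTop] at h ⊢
  intro ε hε
  obtain ⟨δ, hδ, hd⟩ := smallE D htop x hε
  obtain ⟨N, hN⟩ := h δ hδ
  refine ⟨N, fun n hn => ?_⟩
  have h2 := hN n hn
  rw [Real.dist_eq, sub_zero] at h2
  have := hd (f n) (lt_of_abs_lt h2)
  rwa [dist_comm]

private lemma contD (D : ℂ → ℂ → ℝ) (hD0 : ∀ x y, D x y = 0 ↔ x = y)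
    (hDsymm : ∀ x y, D x y = D y x) (hDtri : ∀ x y z, D x z ≤ D x y + D y z)
    (htop : ∀ s : Set ℂ, IsOpen s ↔ ∀ x ∈ s, ∃ ε > 0, {y : ℂ | D x y < ε} ⊆ s) :
    Continuous (fun p : ℂ × ℂ => D p.1 p.2) := by
  rw [Metric.continuous_iff]
  rintro ⟨x, y⟩ ε hε
  obtain ⟨δ₁, hδ₁, h1⟩ := smallD D hD0 hDtri htop x (by linarith : (0:ℝ) < ε/2)
  obtain ⟨δ₂, hδ₂, h2⟩ := smallD D hD0 hDtri htop y (by linarith : (0:ℝ) < ε/2)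
  refine ⟨min δ₁ δ₂, lt_min hδ₁ hδ₂, ?_⟩
  rintro ⟨a, b⟩ hab
  rw [Prod.dist_eq] at hab
  have hax : D x a < ε/2 := h1 a (by
    rw [dist_comm]
    exact lt_of_le_of_lt (le_max_left _ _) (lt_of_lt_of_le hab (min_le_left _ _)))
  have hby : D y b < ε/2 := h2 b (by
    rw [dist_comm]
    exact lt_of_le_of_lt (le_max_right _ _) (lt_of_lt_of_le hab (min_le_right _ _)))
  have t1 : D a b ≤ D a x + D x b := hDtri a x b
  have t2 : D x b ≤ D x y + D y b := hDtri x y b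
  have t3 : D x y ≤ D x a + D a y := hDtri x a y
  have t4 : D a y ≤ D a b + D b y := hDtri a b y
  have s1 : D a x = D x a := hDsymm a x
  have s2 : D y b = D b y := hDsymm y b
  rw [Real.dist_eq, abs_sub_lt_iff]
  constructor <;> linarith

private lemma compK (D : ℂ → ℂ → ℝ) (hD0 : ∀ x y, D x y = 0 ↔ x = y)
    (hDsymm : ∀ x y, D x y = D y x) (hDtri : ∀ x y z, D x z ≤ D x y + D y z)
    (htop : ∀ s : Set ℂ, IsOpen s ↔ ∀ x ∈ s, ∃ ε > 0, {y : ℂ | D x y < ε} ⊆ s)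
    {K : Set ℂ} (hK : IsCompact K) {ε : ℝ} (hε : 0 < ε) :
    ∃ δ > 0, ∀ w ∈ K, ∀ w' ∈ K, D w w' < δ → dist w w' < ε := by
  set S := (K ×ˢ K) ∩ {p : ℂ × ℂ | ε ≤ dist p.1 p.2} with hSdef
  have hScomp : IsCompact S :=
    (hK.prod hK).inter_right (isClosed_le continuous_const continuous_dist)
  rcases S.eq_empty_or_nonempty with hemp | hne
  · refine ⟨1, one_pos, fun w hw w' hw' _ => ?_⟩
    by_contra hc
    push_neg at hc
    have : (w, w') ∈ S := ⟨Set.mk_mem_prod hw hw', hc⟩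
    rw [hemp] at this
    exact this
  · obtain ⟨p0, hp0S, hmin⟩ :=
      hScomp.exists_isMinOn hne ((contD D hD0 hDsymm hDtri htop).continuousOn)
    refine ⟨D p0.1 p0.2, ?_, ?_⟩
    · rcases (dnn D hD0 hDsymm hDtri p0.1 p0.2).lt_or_eq with h | h
      · exact h
      · exfalso
        have h1 : p0.1 = p0.2 := (hD0 _ _).mp h.symm
        have h2 : ε ≤ dist p0.1 p0.2 := hp0S.2
        rw [h1, dist_self] at h2
        linarith
    · intro w hw w' hw' hlt
      by_contra hc
      push_neg at hc
      have hmem : (w, w') ∈ S := ⟨Set.mk_mem_prod hw hw', hc⟩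
      exact absurd hlt (not_lt.mpr (hmin hmem))

private lemma ratDense' (z : ℂ) {ε : ℝ} (hε : 0 < ε) :
    ∃ q : ℂ, (∃ a b : ℚ, q = (a : ℝ) + (b : ℝ) * Complex.I) ∧ dist z q < ε := by
  obtain ⟨a, ha⟩ := exists_rat_near z.re (by linarith : (0:ℝ) < ε/2)
  obtain ⟨b, hb⟩ := exists_rat_near z.im (by linarith : (0:ℝ) < ε/2)
  refine ⟨(a : ℝ) + (b : ℝ) * Complex.I, ⟨a, b, rfl⟩, ?_⟩
  rw [Complex.dist_eq]
  have hre : (z - ((a : ℝ) + (b : ℝ) * Complex.I)).re = z.re - a := by simp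
  have him : (z - ((a : ℝ) + (b : ℝ) * Complex.I)).im = z.im - b := by simp
  calc ‖z - ((a : ℝ) + (b : ℝ) * Complex.I)‖
      ≤ |(z - ((a : ℝ) + (b : ℝ) * Complex.I)).re| + |(z - ((a : ℝ) + (b : ℝ) * Complex.I)).im| :=
        Complex.norm_le_abs_re_add_abs_im _
    _ < ε := by rw [hre, him]; linarith
set_option maxHeartbeats 1000000 in
set_option synthInstance.maxHeartbeats 1000000 in
/-- **Existence and rational approximation of geodesics to boundary points of filled metric
balls** (part of Lemma 2.5 of Gwynne-Miller, "Confluence of geodesics in Liouville quantum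
gravity for γ ∈ (0,2)"). Let `D` be a metric on `ℂ` inducing the Euclidean topology such that
`(ℂ, D)` is a proper length space with unique `D`-geodesics from `0` to each rational point.
Then for every `s > 0` and every `y ∈ ∂𝓑_s^•(0;D)` one has `D 0 y = s`, and there is a
`D`-geodesic `P` from `0` to `y` and points `qₘ ∈ ℚ² ∖ 𝓑_s^•(0;D)` whose geodesics from `0`
converge to `P` uniformly on `[0,s]`. -/
theorem boundary_geodesic_rational_approximation (D : ℂ → ℂ → ℝ)
    (hD0 : ∀ x y, D x y = 0 ↔ x = y)
    (hDsymm : ∀ x y, D x y = D y x)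
    (hDtri : ∀ x y z, D x z ≤ D x y + D y z)
    (htop : ∀ s : Set ℂ, IsOpen s ↔ ∀ x ∈ s, ∃ ε > 0, {y : ℂ | D x y < ε} ⊆ s)
    (hproper : ∀ (x : ℂ) (r : ℝ), IsCompact {y : ℂ | D x y ≤ r})
    (hlength : IsLengthSpace D)
    (hexists : ∀ q : ℂ, IsRationalPoint q → ∃ P : ℝ → ℂ, IsGeodesicFrom D 0 q P)
    (huniq : ∀ q : ℂ, IsRationalPoint q → ∀ P P' : ℝ → ℂ,
      IsGeodesicFrom D 0 q P → IsGeodesicFrom D 0 q P' →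
      ∀ t ∈ Icc (0 : ℝ) (D 0 q), P t = P' t)
    (s : ℝ) (hs : 0 < s) (y : ℂ) (hy : y ∈ frontier (filledBall D 0 s)) :
    D 0 y = s ∧
      ∃ P : ℝ → ℂ, IsGeodesicFrom D 0 y P ∧
        ∃ q : ℕ → ℂ, (∀ m, IsRationalPoint (q m) ∧ q m ∉ filledBall D 0 s) ∧
          ∃ Pq : ℕ → ℝ → ℂ, (∀ m, IsGeodesicFrom D 0 (q m) (Pq m)) ∧
            TendstoUniformlyOn (fun m => Pq m) P Filter.atTop (Icc 0 s) := by
  classical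
  -- Topological preliminaries on the filled ball
  have hCc_open : IsOpen (closure {v : ℂ | D 0 v < s})ᶜ := isClosed_closure.isOpen_compl
  have hFc_open : IsOpen (filledBall D 0 s)ᶜ := by
    rw [isOpen_iff_forall_mem_open]
    intro w hw
    simp only [mem_compl_iff, filledBall, mem_setOf_eq] at hw
    have hwC : w ∈ (closure {v : ℂ | D 0 v < s})ᶜ := by
      by_contra hc
      exact hw (by
        rw [connectedComponentIn_eq_empty hc]
        exact Bornology.isBounded_empty)
    refine ⟨connectedComponentIn (closure {v : ℂ | D 0 v < s})ᶜ w, ?_,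
      hCc_open.connectedComponentIn, mem_connectedComponentIn hwC⟩
    intro w' hw'
    simp only [mem_compl_iff, filledBall, mem_setOf_eq]
    rw [← connectedComponentIn_eq hw']
    exact hw
  have hFclosed : IsClosed (filledBall D 0 s) := isOpen_compl_iff.mp hFc_open
  have hyF : y ∈ filledBall D 0 s := by
    have h1 : y ∈ closure (filledBall D 0 s) := frontier_subset_closure hy
    rwa [hFclosed.closure_eq] at h1
  have hyFc : y ∈ closure ((filledBall D 0 s)ᶜ) := by
    rw [frontier_eq_closure_inter_closure] at hy
    exact hy.2
  have hyNI : y ∉ interior (filledBall D 0 s) := by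
    intro hint
    rcases mem_closure_iff.mp hyFc (interior (filledBall D 0 s)) isOpen_interior hint with
      ⟨z, hz1, hz2⟩
    exact hz2 (interior_subset hz1)
  -- y lies in the closure of the open ball
  have hyC : y ∈ closure {v : ℂ | D 0 v < s} := by
    by_contra hyc
    have hyCc : y ∈ (closure {v : ℂ | D 0 v < s})ᶜ := hyc
    have hVopen : IsOpen (connectedComponentIn (closure {v : ℂ | D 0 v < s})ᶜ y) :=
      hCc_open.connectedComponentIn
    have hyV := mem_connectedComponentIn hyCc
    have hVbd : Bornology.IsBounded (connectedComponentIn (closure {v : ℂ | D 0 v < s})ᶜ y) := hyF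
    have hVF : connectedComponentIn (closure {v : ℂ | D 0 v < s})ᶜ y ⊆ filledBall D 0 s := by
      intro w' hw'
      simp only [filledBall, mem_setOf_eq]
      rw [← connectedComponentIn_eq hw']
      exact hVbd
    exact hyNI (interior_maximal hVF hVopen hyV)
  have hclosed_le : IsClosed {v : ℂ | D 0 v ≤ s} := by
    rw [← isOpen_compl_iff, htop]
    intro z hz
    simp only [mem_compl_iff, mem_setOf_eq, not_le] at hz
    refine ⟨D 0 z - s, by linarith, fun w hw => ?_⟩
    simp only [mem_setOf_eq] at hw
    simp only [mem_compl_iff, mem_setOf_eq, not_le]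
    have t1 : D 0 z ≤ D 0 w + D w z := hDtri 0 w z
    have t2 : D w z = D z w := hDsymm w z
    linarith
  have hle : D 0 y ≤ s := by
    have hsub : closure {v : ℂ | D 0 v < s} ⊆ {v : ℂ | D 0 v ≤ s} :=
      closure_minimal (fun v hv => show D 0 v ≤ s from le_of_lt hv) hclosed_le
    exact hsub hyC
  have hBopen : IsOpen {v : ℂ | D 0 v < s} := openLT D htop hDtri 0 s
  have hFcBc : (filledBall D 0 s)ᶜ ⊆ {v : ℂ | D 0 v < s}ᶜ := by
    intro w hw
    simp only [mem_compl_iff, filledBall, mem_setOf_eq] at hw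
    have hwC : w ∈ (closure {v : ℂ | D 0 v < s})ᶜ := by
      by_contra hc
      exact hw (by
        rw [connectedComponentIn_eq_empty hc]
        exact Bornology.isBounded_empty)
    exact fun hwB => hwC (subset_closure hwB)
  have hge : s ≤ D 0 y := by
    have h1 : closure ((filledBall D 0 s)ᶜ) ⊆ {v : ℂ | D 0 v < s}ᶜ :=
      closure_minimal hFcBc hBopen.isClosed_compl
    have h2 := h1 hyFc
    simp only [mem_compl_iff, mem_setOf_eq, not_lt] at h2
    exact h2
  have hDy : D 0 y = s := le_antisymm hle hge
  -- Rational points outside the filled ball converging to y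
  have hstep : ∀ m : ℕ, ∃ q : ℂ, IsRationalPoint q ∧ q ∉ filledBall D 0 s ∧
      dist y q < 1/(m+1) := by
    intro m
    obtain ⟨p, hpFc, hpd⟩ := Metric.mem_closure_iff.mp hyFc (1/(m+1)/2) (by positivity)
    obtain ⟨r, hr, hball⟩ := Metric.isOpen_iff.mp hFc_open p hpFc
    obtain ⟨qq, hqrat, hqd⟩ := ratDense' p (lt_min hr (by positivity : (0:ℝ) < 1/(m+1)/2))
    refine ⟨qq, hqrat, ?_, ?_⟩
    · exact hball (by
        rw [Metric.mem_ball, dist_comm]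
        exact lt_of_lt_of_le hqd (min_le_left _ _))
    · calc dist y qq ≤ dist y p + dist p qq := dist_triangle _ _ _
        _ < 1/(m+1)/2 + min r (1/(m+1)/2) := add_lt_add hpd hqd
        _ ≤ 1/(m+1) := by
            have := min_le_right r (1/(↑m+1)/2)
            linarith
  choose qseq hq1 hq2 hq3 using hstep
  have hqy : Filter.Tendsto qseq Filter.atTop (nhds y) := by
    rw [tendsto_iff_dist_tendsto_zero]
    refine squeeze_zero (fun m => dist_nonneg) (fun m => ?_)
      tendsto_one_div_add_atTop_nhds_zero_nat
    rw [dist_comm]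
    exact (hq3 m).le
  have hDyq : Filter.Tendsto (fun m => D y (qseq m)) Filter.atTop (nhds 0) :=
    tendstoD D hD0 hDsymm hDtri htop hqy
  have hdm_ge : ∀ m, s ≤ D 0 (qseq m) := by
    intro m
    by_contra hc
    push_neg at hc
    refine hq2 m ?_
    simp only [filledBall, mem_setOf_eq]
    rw [connectedComponentIn_eq_empty (not_not_intro (subset_closure (show qseq m ∈ {v : ℂ | D 0 v < s} from hc)))]
    exact Bornology.isBounded_empty
  have hds : Filter.Tendsto (fun m => D 0 (qseq m)) Filter.atTop (nhds s) := by
    have hup : ∀ m, D 0 (qseq m) ≤ s + D y (qseq m) := by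
      intro m
      have := hDtri 0 y (qseq m)
      rw [hDy] at this
      linarith
    have h2 : Filter.Tendsto (fun m => s + D y (qseq m)) Filter.atTop (nhds s) := by
      have := (tendsto_const_nhds (x := s) (f := Filter.atTop (α := ℕ))).add hDyq
      simpa using this
    exact tendsto_of_tendsto_of_tendsto_of_le_of_le tendsto_const_nhds h2 hdm_ge hup
  -- Geodesics to the rational points
  have hex : ∀ m, ∃ P : ℝ → ℂ, IsGeodesicFrom D 0 (qseq m) P := fun m => hexists _ (hq1 m)
  choose Porig hP using hex
  have hIccsub : ∀ m, ∀ t : ℝ, t ∈ Icc (0:ℝ) s → t ∈ Icc (0:ℝ) (D 0 (qseq m)) :=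
    fun m t ht => ⟨ht.1, ht.2.trans (hdm_ge m)⟩
  have hiso : ∀ m, ∀ a ∈ Icc (0:ℝ) s, ∀ b ∈ Icc (0:ℝ) s,
      D (Porig m a) (Porig m b) = |a - b| :=
    fun m a ha b hb => (hP m).2.2 a (hIccsub m a ha) b (hIccsub m b hb)
  have hval : ∀ m, ∀ t : ℝ, t ∈ Icc (0:ℝ) s → D 0 (Porig m t) ≤ s := by
    intro m t ht
    have h0 : (0:ℝ) ∈ Icc (0:ℝ) s := ⟨le_refl 0, hs.le⟩
    have := hiso m 0 h0 t ht
    rw [(hP m).1] at this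
    rw [this, zero_sub, abs_neg, abs_of_nonneg ht.1]
    exact ht.2
  -- Equicontinuity
  have hKcomp : IsCompact {w : ℂ | D 0 w ≤ s} := hproper 0 s
  have hequi' : ∀ ε : ℝ, 0 < ε → ∃ δ > 0, ∀ t0 t : Icc (0:ℝ) s, dist t t0 < δ →
      ∀ m, dist (Porig m t0.val) (Porig m t.val) < ε := by
    intro ε hε
    obtain ⟨δ, hδ, hcmp⟩ := compK D hD0 hDsymm hDtri htop hKcomp hε
    refine ⟨δ, hδ, fun t0 t ht m => ?_⟩
    refine hcmp _ (hval m _ t0.2) _ (hval m _ t.2) ?_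
    rw [hiso m _ t0.2 _ t.2]
    rw [Subtype.dist_eq, Real.dist_eq] at ht
    rw [abs_sub_comm]
    exact ht
  have hequi : Equicontinuous (fun m (t : Icc (0:ℝ) s) => Porig m t.val) := by
    intro t0
    rw [Metric.equicontinuousAt_iff]
    intro ε hε
    obtain ⟨δ, hδ, hcmp⟩ := hequi' ε hε
    exact ⟨δ, hδ, fun t ht m => hcmp t0 t ht m⟩
  have hcont : ∀ m, Continuous (fun t : Icc (0:ℝ) s => Porig m t.val) :=
    fun m => hequi.continuous m
  let G : ℕ → (BoundedContinuousFunction (Icc (0:ℝ) s) ℂ) :=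
    fun m => BoundedContinuousFunction.mkOfCompact ⟨_, hcont m⟩
  have hGcoe : ∀ m, ⇑(G m) = fun t : Icc (0:ℝ) s => Porig m t.val := fun m => rfl
  have hin : ∀ (f : BoundedContinuousFunction (Icc (0:ℝ) s) ℂ) (x : Icc (0:ℝ) s), f ∈ Set.range G →
      f x ∈ {w : ℂ | D 0 w ≤ s} := by
    rintro f x ⟨m, rfl⟩
    exact hval m x.val x.2
  have hAequi : Equicontinuous ((↑) : Set.range G → Icc (0:ℝ) s → ℂ) := by
    intro t0
    rw [Metric.equicontinuousAt_iff]
    intro ε hε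
    obtain ⟨δ, hδ, hcmp⟩ := hequi' ε hε
    refine ⟨δ, hδ, fun t ht f => ?_⟩
    obtain ⟨m, hm⟩ := f.2
    have hfm : ⇑(f : BoundedContinuousFunction (Icc (0:ℝ) s) ℂ) = fun t : Icc (0:ℝ) s => Porig m t.val := by
      rw [← hm]; exact hGcoe m
    show dist ((f : BoundedContinuousFunction (Icc (0:ℝ) s) ℂ) t0) ((f : BoundedContinuousFunction (Icc (0:ℝ) s) ℂ) t) < ε
    rw [hfm]
    exact hcmp t0 t ht m
  have hclos : IsCompact (closure (Set.range G)) :=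
    BoundedContinuousFunction.arzela_ascoli _ hKcomp _ hin hAequi
  obtain ⟨g, hgA, φ, hφ, hgt⟩ :=
    hclos.tendsto_subseq (fun m => subset_closure (Set.mem_range_self (f := G) m))
  have huc : TendstoUniformly (fun k => ⇑(G (φ k))) (⇑g) Filter.atTop :=
    BoundedContinuousFunction.tendsto_iff_tendstoUniformly.mp hgt
  have hptw : ∀ t : Icc (0:ℝ) s,
      Filter.Tendsto (fun k => Porig (φ k) t.val) Filter.atTop (nhds (g t)) :=
    fun t => huc.tendsto_at t
  have hs0 : (0:ℝ) ∈ Icc (0:ℝ) s := ⟨le_refl 0, hs.le⟩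
  have hss : s ∈ Icc (0:ℝ) s := ⟨hs.le, le_refl s⟩
  set P : ℝ → ℂ := fun t => if ht : t ∈ Icc (0:ℝ) s then g ⟨t, ht⟩ else y with hPdef
  have hPval : ∀ (t : ℝ) (ht : t ∈ Icc (0:ℝ) s), P t = g ⟨t, ht⟩ := fun t ht => dif_pos ht
  -- endpoint values
  have hg0 : g ⟨0, hs0⟩ = 0 := by
    refine tendsto_nhds_unique (hptw ⟨0, hs0⟩) ?_
    have heq : (fun k => Porig (φ k) (0:ℝ)) = fun _ => (0:ℂ) := funext fun k => (hP (φ k)).1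
    rw [heq]
    exact tendsto_const_nhds
  have hDyPs : Filter.Tendsto (fun k => D y (Porig (φ k) s)) Filter.atTop (nhds 0) := by
    have hbound : ∀ k, D y (Porig (φ k) s) ≤ D y (qseq (φ k)) + (D 0 (qseq (φ k)) - s) := by
      intro k
      have h1 : D y (Porig (φ k) s) ≤ D y (qseq (φ k)) + D (qseq (φ k)) (Porig (φ k) s) :=
        hDtri _ _ _
      have h2 : D (qseq (φ k)) (Porig (φ k) s) = D 0 (qseq (φ k)) - s := by
        have hmem1 : D 0 (qseq (φ k)) ∈ Icc (0:ℝ) (D 0 (qseq (φ k))) :=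
          ⟨(hs.le.trans (hdm_ge (φ k))), le_refl _⟩
        have hmem2 : s ∈ Icc (0:ℝ) (D 0 (qseq (φ k))) := ⟨hs.le, hdm_ge (φ k)⟩
        have := (hP (φ k)).2.2 _ hmem1 s hmem2
        rw [(hP (φ k)).2.1] at this
        rw [this, abs_of_nonneg (by linarith [hdm_ge (φ k)])]
      rw [h2] at h1
      exact h1
    have hnn : ∀ k, 0 ≤ D y (Porig (φ k) s) := fun k => dnn D hD0 hDsymm hDtri _ _
    have hlim : Filter.Tendsto (fun k => D y (qseq (φ k)) + (D 0 (qseq (φ k)) - s))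
        Filter.atTop (nhds 0) := by
      have h1 : Filter.Tendsto (fun k => D y (qseq (φ k))) Filter.atTop (nhds 0) :=
        hDyq.comp hφ.tendsto_atTop
      have h2 : Filter.Tendsto (fun k => D 0 (qseq (φ k)) - s) Filter.atTop (nhds 0) := by
        have := (hds.comp hφ.tendsto_atTop).sub (tendsto_const_nhds (x := s))
        simpa using this
      simpa using h1.add h2
    exact squeeze_zero hnn hbound hlim
  have hPs_tendsto : Filter.Tendsto (fun k => Porig (φ k) s) Filter.atTop (nhds y) :=
    tendstoE D htop hDyPs
  have hgs : g ⟨s, hss⟩ = y := tendsto_nhds_unique (hptw ⟨s, hss⟩) hPs_tendsto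
  -- P is an isometric embedding of [0,s]
  have hPiso : ∀ a ∈ Icc (0:ℝ) s, ∀ b ∈ Icc (0:ℝ) s, D (P a) (P b) = |a - b| := by
    intro a ha b hb
    have hPa : Filter.Tendsto (fun k => Porig (φ k) a) Filter.atTop (nhds (P a)) := by
      rw [hPval a ha]; exact hptw ⟨a, ha⟩
    have hPb : Filter.Tendsto (fun k => Porig (φ k) b) Filter.atTop (nhds (P b)) := by
      rw [hPval b hb]; exact hptw ⟨b, hb⟩
    have hta : Filter.Tendsto (fun k => D (P a) (Porig (φ k) a)) Filter.atTop (nhds 0) :=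
      tendstoD D hD0 hDsymm hDtri htop hPa
    have htb : Filter.Tendsto (fun k => D (P b) (Porig (φ k) b)) Filter.atTop (nhds 0) :=
      tendstoD D hD0 hDsymm hDtri htop hPb
    have key : ∀ k, abs (D (P a) (P b) - |a - b|) ≤
        D (P a) (Porig (φ k) a) + D (P b) (Porig (φ k) b) := by
      intro k
      have hiso_k : D (Porig (φ k) a) (Porig (φ k) b) = |a - b| := hiso (φ k) a ha b hb
      have t1 : D (P a) (P b) ≤ D (P a) (Porig (φ k) a) + D (Porig (φ k) a) (P b) :=
        hDtri _ _ _
      have t2 : D (Porig (φ k) a) (P b) ≤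
          D (Porig (φ k) a) (Porig (φ k) b) + D (Porig (φ k) b) (P b) := hDtri _ _ _
      have t3 : D (Porig (φ k) a) (Porig (φ k) b) ≤
          D (Porig (φ k) a) (P a) + D (P a) (Porig (φ k) b) := hDtri _ _ _
      have t4 : D (P a) (Porig (φ k) b) ≤ D (P a) (P b) + D (P b) (Porig (φ k) b) :=
        hDtri _ _ _
      have s1 : D (Porig (φ k) a) (P a) = D (P a) (Porig (φ k) a) := hDsymm _ _
      have s2 : D (Porig (φ k) b) (P b) = D (P b) (Porig (φ k) b) := hDsymm _ _
      rw [abs_sub_le_iff]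
      constructor <;> linarith
    have hle0 : abs (D (P a) (P b) - |a - b|) ≤ 0 := by
      have hlim2 : Filter.Tendsto
          (fun k => D (P a) (Porig (φ k) a) + D (P b) (Porig (φ k) b))
          Filter.atTop (nhds 0) := by simpa using hta.add htb
      exact ge_of_tendsto' hlim2 key
    have := abs_eq_zero.mp (le_antisymm hle0 (abs_nonneg _))
    linarith [abs_nonneg (a - b)]
  refine ⟨hDy, P, ?_, fun k => qseq (φ k), fun k => ⟨hq1 (φ k), hq2 (φ k)⟩,
    fun k => Porig (φ k), fun k => hP (φ k), ?_⟩
  · refine ⟨?_, ?_, ?_⟩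
    · rw [hPval 0 hs0, hg0]
    · rw [hDy, hPval s hss, hgs]
    · simp only [hDy]
      exact hPiso
  · rw [tendstoUniformlyOn_iff_tendstoUniformly_comp_coe]
    have hPcoe : (P ∘ ((↑) : Icc (0:ℝ) s → ℝ)) = ⇑g := by
      funext t
      rw [Function.comp_apply, hPval _ t.2]
    rw [hPcoe]
    exact huc
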